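/- Let a ∈ ℝ and δ > 0, and let f : ℝ → ℂ be differentiable at every point of [a, a+δ] with derivative f' interval-integrable on [a, a+δ]. Then the right-hand local Fourier series of f at a converges with symmetric partial sums, and f(a)/2 = (1/(2δ)) lim_{M→∞} ∑_{n=-M}^{M} e^{iπna/δ} ∫_{a}^{a+δ} f(u) e^{-iπnu/δ} du. -/

import Mathlib

open MeasureTheory intervalIntegral
open Complex Filter
open scoped FourierTransform Real

/-- Corollary II of the paper (right-hand local Fourier series): for `f` differentiable
on `[a, a+δ]` with integrable derivative,
`f(a)/2 = (1/(2δ)) lim_{M→∞} ∑_{n=-M}^{M} e^{iπna/δ} ∫_{a}^{a+δ} f(u) e^{-iπnu/δ} du`. -/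

lemma reindex (M : ℕ) (F : ℤ → ℂ) :
    ∑ n ∈ Finset.Icc (-(M : ℤ)) (M : ℤ), F n
      = ∑ k ∈ Finset.range (2 * M + 1), F ((k : ℤ) - M) := by
  refine Finset.sum_nbij' (fun n => (n + M).toNat) (fun k => (k : ℤ) - M) ?_ ?_ ?_ ?_ ?_
  · intro n hn; simp only [Finset.mem_Icc] at hn; simp only [Finset.mem_range]; omega
  · intro k hk; simp only [Finset.mem_range] at hk; simp only [Finset.mem_Icc]; omega
  · intro n hn; simp only [Finset.mem_Icc] at hn; omega
  · intro k hk; simp only [Finset.mem_range] at hk; omega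
  · intro n hn; simp only [Finset.mem_Icc] at hn
    congr 1; omega

lemma dirichlet_mul (M : ℕ) (x : ℝ) :
    (∑ n ∈ Finset.Icc (-(M : ℤ)) (M : ℤ), Complex.exp (2 * n * x * I)) * Complex.sin x
      = Complex.sin ((2 * M + 1) * x) := by
  have h2I : (2 : ℂ) * I ≠ 0 := by simp [I_ne_zero]
  have key : (∑ n ∈ Finset.Icc (-(M : ℤ)) (M : ℤ), Complex.exp (2 * n * x * I))
      * (Complex.exp (x * I) - Complex.exp (-x * I))
      = Complex.exp ((2 * M + 1) * x * I) - Complex.exp (-((2 * M + 1) * x) * I) := by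
    rw [Finset.sum_mul,
      reindex M (fun n => Complex.exp (2 * n * x * I) * (Complex.exp (x * I) - Complex.exp (-x * I)))]
    have step : ∀ k ∈ Finset.range (2 * M + 1),
        Complex.exp (2 * ((k : ℤ) - (M:ℤ) : ℤ) * x * I) * (Complex.exp (x * I) - Complex.exp (-x * I))
          = (fun j : ℕ => Complex.exp ((2 * (j:ℂ) - (2 * M + 1)) * x * I)) (k + 1)
            - (fun j : ℕ => Complex.exp ((2 * (j:ℂ) - (2 * M + 1)) * x * I)) k := by
      intro k _
      dsimp only
      rw [mul_sub, ← Complex.exp_add, ← Complex.exp_add]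
      congr 1 <;> congr 1 <;> push_cast <;> ring
    rw [Finset.sum_congr rfl step,
      Finset.sum_range_sub (fun j : ℕ => Complex.exp ((2 * (j:ℂ) - (2 * M + 1)) * x * I))]
    congr 1 <;> congr 1 <;> push_cast <;> ring
  have hsin : Complex.exp (x * I) - Complex.exp (-x * I) = 2 * I * Complex.sin x := by
    rw [Complex.sin]
    linear_combination (Complex.exp ((x:ℂ) * I) - Complex.exp (-(x:ℂ) * I)) * Complex.I_sq
  have hsin2 : Complex.exp ((2 * M + 1) * x * I) - Complex.exp (-((2 * M + 1) * x) * I)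
      = 2 * I * Complex.sin ((2 * M + 1) * x) := by
    rw [Complex.sin]
    linear_combination (Complex.exp (((2 * M + 1) * x : ℂ) * I) - Complex.exp (-((2 * M + 1) * x : ℂ) * I)) * Complex.I_sq
  rw [hsin, hsin2] at key
  apply mul_left_cancel₀ h2I
  linear_combination key


lemma En_val (a δ c : ℝ) (hcpos : 0 < c) (hcd : c * δ = Real.pi / 2) (n : ℤ) (hn : n ≠ 0) :
    (∫ u in a..(a + δ), Complex.exp (2 * n * c * (a - u) * I))
      = (1 - Complex.exp (-(n * Real.pi) * I)) / (2 * n * c * I) := by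
  have hne : (2 : ℂ) * n * c * I ≠ 0 := by
    simp only [mul_ne_zero_iff]
    refine ⟨⟨⟨two_ne_zero, ?_⟩, ?_⟩, I_ne_zero⟩
    · exact_mod_cast hn
    · exact_mod_cast hcpos.ne'
  have hβ : (-(2 * (n:ℂ) * c * I)) ≠ 0 := neg_ne_zero.mpr hne
  have this1 : ∀ u : ℝ, Complex.exp (2 * n * c * (a - u) * I)
      = Complex.exp (2 * n * c * a * I) * Complex.exp ((-(2 * (n:ℂ) * c * I)) * u) := by
    intro u; rw [← Complex.exp_add]; push_cast; ring_nf
  rw [intervalIntegral.integral_congr (fun u _ => this1 u), intervalIntegral.integral_const_mul,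
    integral_exp_mul_complex hβ]
  have hcdC : (c : ℂ) * δ = (Real.pi : ℂ) / 2 := by exact_mod_cast congrArg (Complex.ofReal ·) hcd
  have key : Complex.exp (2 * n * c * a * I) *
      ((Complex.exp (-(2 * (n:ℂ) * c * I) * ((a:ℝ) + δ : ℝ)) - Complex.exp (-(2 * (n:ℂ) * c * I) * a)) / (-(2 * (n:ℂ) * c * I)))
      = (Complex.exp (2 * (n:ℂ) * c * a * I + -(2 * (n:ℂ) * c * I) * a)
          - Complex.exp (2 * (n:ℂ) * c * a * I + -(2 * (n:ℂ) * c * I) * ((a:ℂ) + δ))) / (2 * (n:ℂ) * c * I) := by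
    rw [Complex.exp_add, Complex.exp_add]
    push_cast
    rw [div_neg, eq_div_iff hne, mul_assoc, neg_mul, div_mul_cancel₀ _ hne]
    ring
  rw [key]
  have e1 : 2 * (n:ℂ) * c * a * I + -(2 * n * c * I) * ((a:ℂ) + δ) = -(n * Real.pi) * I := by
    rw [show 2 * (n:ℂ) * c * a * I + -(2 * n * c * I) * ((a:ℂ) + δ) = (-(2:ℂ)*n*I) * ((c:ℂ)*δ) by ring, hcdC]
    ring
  have e2 : 2 * (n:ℂ) * c * a * I + -(2 * n * c * I) * (a:ℂ) = 0 := by ring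
  rw [e2, e1, Complex.exp_zero]

lemma kernel_integral (a δ c : ℝ) (hδ : 0 < δ) (hcpos : 0 < c) (hcd : c * δ = Real.pi / 2) (M : ℕ) :
    (∑ n ∈ Finset.Icc (-(M : ℤ)) (M : ℤ),
        ∫ u in a..(a + δ), Complex.exp (2 * n * c * (a - u) * I)) = (δ : ℂ) := by
  set E : ℤ → ℂ := fun n => ∫ u in a..(a + δ), Complex.exp (2 * n * c * (a - u) * I) with hE
  have hpair : ∀ n : ℤ, E n + E (-n) = if n = 0 then 2 * (δ:ℂ) else 0 := by
    intro n
    by_cases h0 : n = 0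
    · subst h0
      simp only [hE, neg_zero, if_pos rfl]
      norm_num
      push_cast; ring
    · rw [if_neg h0, hE]
      dsimp only
      rw [En_val a δ c hcpos hcd n h0, En_val a δ c hcpos hcd (-n) (neg_ne_zero.mpr h0)]
      have hen : Complex.exp (-(n:ℂ) * Real.pi * I) = Complex.exp ((n:ℂ) * Real.pi * I) := by
        rw [show -((n:ℂ)) * Real.pi * I = (-n : ℤ) * (Real.pi * I) by push_cast; ring,
          show ((n:ℂ)) * Real.pi * I = (n : ℤ) * (Real.pi * I) by push_cast; ring,
          Complex.exp_int_mul, Complex.exp_int_mul, Complex.exp_pi_mul_I]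
        rw [zpow_neg]
        rcases Int.even_or_odd n with he | ho
        · rw [(Even.neg_one_zpow he : (-1:ℂ)^n = 1)]; norm_num
        · rw [Odd.neg_one_zpow ho]; norm_num
      have h2 : ((2:ℂ) * ((-n:ℤ):ℂ) * c * I) = -(2*(n:ℂ)*c*I) := by push_cast; ring
      rw [h2, div_neg, ← sub_eq_add_neg, div_sub_div_same]
      convert zero_div _ using 2
      rw [show (-(↑n * ↑Real.pi) * I : ℂ) = -↑n * ↑Real.pi * I by ring,
          show (-(((-n:ℤ):ℂ) * (Real.pi:ℂ)) * I : ℂ) = ↑n * ↑Real.pi * I by push_cast; ring, hen]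
      ring
  have hrefl : ∑ n ∈ Finset.Icc (-(M:ℤ)) (M:ℤ), E n = ∑ n ∈ Finset.Icc (-(M:ℤ)) (M:ℤ), E (-n) := by
    refine Finset.sum_nbij' (fun n => -n) (fun n => -n) ?_ ?_ ?_ ?_ ?_
    · intro n hn; simp only [Finset.mem_Icc] at *; omega
    · intro n hn; simp only [Finset.mem_Icc] at *; omega
    · intro n _; omega
    · intro n _; omega
    · intro n _; rw [neg_neg]
  have hsum : (∑ n ∈ Finset.Icc (-(M:ℤ)) (M:ℤ), E n) + (∑ n ∈ Finset.Icc (-(M:ℤ)) (M:ℤ), E n)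
      = 2 * (δ:ℂ) := by
    nth_rewrite 2 [hrefl]
    rw [← Finset.sum_add_distrib]
    rw [Finset.sum_congr rfl (fun n _ => hpair n)]
    rw [Finset.sum_ite_eq' (Finset.Icc (-(M:ℤ)) (M:ℤ)) (0:ℤ) (fun _ => 2 * (δ:ℂ))]
    rw [if_pos]
    simp only [Finset.mem_Icc]
    omega
  have h2 : (2:ℂ) ≠ 0 := two_ne_zero
  apply mul_left_cancel₀ h2
  linear_combination hsum


section
variable (a δ c : ℝ) (f f' : ℝ → ℂ)

noncomputable def psi (a c : ℝ) (f f' : ℝ → ℂ) : ℝ → ℂ := fun u =>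
  if u = a then -(1/c) * f' a else (f u - f a) / ((Real.sin (c * (a - u)) : ℝ) : ℂ)

lemma psi_continuousAt_a (hc : 0 < c) (hf : HasDerivAt f (f' a) a) :
    ContinuousAt (psi a c f f') a := by
  rw [← continuousWithinAt_compl_self]
  have hslope : Tendsto (slope f a) (nhdsWithin a {a}ᶜ) (nhds (f' a)) :=
    hasDerivAt_iff_tendsto_slope.mp hf
  -- real ratio x / sin x → 1
  have hsin1 : Tendsto (fun x : ℝ => Real.sin x / x) (nhdsWithin 0 {0}ᶜ) (nhds 1) := by
    have := hasDerivAt_iff_tendsto_slope.mp (Real.hasDerivAt_sin 0)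
    simp only [Real.cos_zero] at this
    refine this.congr (fun x => ?_)
    simp [slope_def_field, Real.sin_zero, div_eq_inv_mul]
  have hsin2 : Tendsto (fun x : ℝ => x / Real.sin x) (nhdsWithin 0 {0}ᶜ) (nhds 1) := by
    have h := hsin1.inv₀ one_ne_zero
    simp only [inv_one] at h
    refine h.congr (fun x => ?_)
    rw [inv_div]
  -- the map u ↦ c * (a - u) into punctured nbhd of 0
  have hmap : Tendsto (fun u : ℝ => c * (a - u)) (nhdsWithin a {a}ᶜ) (nhdsWithin 0 {0}ᶜ) := by
    rw [tendsto_nhdsWithin_iff]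
    constructor
    · have : Tendsto (fun u : ℝ => c * (a - u)) (nhds a) (nhds (c * (a - a))) :=
        (tendsto_const_nhds.sub tendsto_id).const_mul c
      simp only [sub_self, mul_zero] at this
      exact this.mono_left nhdsWithin_le_nhds
    · filter_upwards [self_mem_nhdsWithin] with u hu
      simp only [Set.mem_compl_iff, Set.mem_singleton_iff] at hu ⊢
      intro h
      rcases mul_eq_zero.mp h with h | h
      · exact absurd h hc.ne'
      · exact hu (sub_eq_zero.mp h).symm
  have hratio : Tendsto (fun u : ℝ => (u - a) / Real.sin (c * (a - u)))
      (nhdsWithin a {a}ᶜ) (nhds (-(1/c))) := by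
    have h1 : Tendsto (fun u : ℝ => (-(1/c)) * ((c * (a - u)) / Real.sin (c * (a - u))))
        (nhdsWithin a {a}ᶜ) (nhds ((-(1/c)) * 1)) := ((hsin2.comp hmap).const_mul _)
    simp only [mul_one] at h1
    refine h1.congr (fun u => ?_)
    rw [mul_div_assoc']
    congr 1
    field_simp
    ring
  have hratioC : Tendsto (fun u : ℝ => (((u:ℂ) - a) / ((Real.sin (c * (a - u)) : ℝ) : ℂ)))
      (nhdsWithin a {a}ᶜ) (nhds ((-(1/c) : ℝ) : ℂ)) := by
    have := (Complex.continuous_ofReal.tendsto _).comp hratio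
    refine this.congr (fun u => ?_)
    simp only [Function.comp_apply]
    push_cast
    rfl
  have hprod := hslope.mul hratioC
  have hval : psi a c f f' a = f' a * ((-(1/c) : ℝ) : ℂ) := by
    simp only [psi, if_pos rfl]
    push_cast
    ring
  rw [ContinuousWithinAt, hval]
  refine hprod.congr' ?_
  filter_upwards [self_mem_nhdsWithin] with u hu
  simp only [Set.mem_compl_iff, Set.mem_singleton_iff] at hu
  have hu' : ((u:ℂ) - a) ≠ 0 := by
    simpa [sub_eq_zero] using fun h => hu (by exact_mod_cast h)
  simp only [psi, if_neg hu, slope_def_module, real_smul]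
  push_cast
  field_simp

lemma sin_neg_on (hδ : 0 < δ) (hc : 0 < c) (hcd : c * δ = Real.pi / 2) :
    ∀ u ∈ Set.Icc a (a + δ), u ≠ a → Real.sin (c * (a - u)) < 0 := by
  intro u hu hne
  obtain ⟨h1, h2⟩ := hu
  have hlt : a < u := lt_of_le_of_ne h1 (Ne.symm hne)
  apply Real.sin_neg_of_neg_of_neg_pi_lt
  · nlinarith
  · nlinarith [Real.pi_pos]

lemma psi_continuousOn (hδ : 0 < δ) (hc : 0 < c) (hcd : c * δ = Real.pi / 2)
    (hdiff : ∀ x ∈ Set.Icc a (a + δ), HasDerivAt f (f' x) x) :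
    ContinuousOn (psi a c f f') (Set.Icc a (a + δ)) := by
  have hfc : ContinuousOn f (Set.Icc a (a + δ)) :=
    fun x hx => (hdiff x hx).continuousAt.continuousWithinAt
  intro u hu
  by_cases hua : u = a
  · subst hua
    exact (psi_continuousAt_a u c f f' hc
      (hdiff u ⟨le_refl u, by linarith⟩)).continuousWithinAt
  · have hsne : Real.sin (c * (a - u)) ≠ 0 := (sin_neg_on a δ c hδ hc hcd u hu hua).ne
    have hg : ContinuousWithinAt
        (fun x => (f x - f a) / ((Real.sin (c * (a - x)) : ℝ) : ℂ)) (Set.Icc a (a + δ)) u := by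
      apply ContinuousWithinAt.div
      · exact ((hfc u hu).sub continuousWithinAt_const)
      · apply Continuous.continuousWithinAt
        exact Complex.continuous_ofReal.comp
          (Real.continuous_sin.comp (continuous_const.mul (continuous_const.sub continuous_id)))
      · exact_mod_cast hsne
    refine hg.congr_of_eventuallyEq ?_ (by simp [psi, if_neg hua])
    filter_upwards [mem_nhdsWithin_of_mem_nhds (isOpen_ne.mem_nhds hua)] with x hx
    simp [psi, if_neg hx]

lemma psi_spec (hδ : 0 < δ) (hc : 0 < c) (hcd : c * δ = Real.pi / 2) :
    ∀ u ∈ Set.Icc a (a + δ),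
      f u - f a = psi a c f f' u * ((Real.sin (c * (a - u)) : ℝ) : ℂ) := by
  intro u hu
  by_cases hua : u = a
  · subst hua
    simp [psi, if_pos rfl]
  · have hsne : Real.sin (c * (a - u)) ≠ 0 := (sin_neg_on a δ c hδ hc hcd u hu hua).ne
    rw [psi, if_neg hua, div_mul_cancel₀]
    exact_mod_cast hsne
end


lemma rl_limit (a δ c : ℝ) (hδ : 0 < δ) (hc : 0 < c) (φ : ℝ → ℂ)
    (hφ : IntervalIntegrable φ volume a (a + δ)) :
    Tendsto (fun M : ℕ => ∫ u in a..(a + δ),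
        φ u * Complex.sin ((2 * (M:ℂ) + 1) * ((c * (a - u) : ℝ) : ℂ)))
      atTop (nhds 0) := by
  have hab : a ≤ a + δ := by linarith
  set g : ℝ → ℂ := (Set.Ioc a (a + δ)).indicator φ with hg
  have hgint : Integrable g := (hφ.1.integrable_indicator measurableSet_Ioc)
  have hRL : Tendsto (fun w : ℝ => ∫ v, 𝐞 (-(v * w)) • g v) (Filter.cocompact ℝ) (nhds 0) :=
    Real.tendsto_integral_exp_smul_cocompact g
  set F : ℝ → ℂ := fun w => ∫ u in a..(a + δ), φ u * Complex.exp (-((w * u : ℝ) : ℂ) * I) with hF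
  have hFeq : ∀ w : ℝ, (∫ v, 𝐞 (-(v * (w / (2 * Real.pi)))) • g v) = F w := by
    intro w
    have hptwise : ∀ v : ℝ, 𝐞 (-(v * (w / (2 * Real.pi)))) • g v
        = (Set.Ioc a (a + δ)).indicator (fun u => φ u * Complex.exp (-((w * u : ℝ) : ℂ) * I)) v := by
      intro v
      simp only [Circle.smul_def, Real.fourierChar_apply, smul_eq_mul, hg]
      by_cases hv : v ∈ Set.Ioc a (a + δ)
      · rw [Set.indicator_of_mem hv, Set.indicator_of_mem hv]
        have harg : (2 * Real.pi * -(v * (w / (2 * Real.pi))) : ℝ) = (-(w * v) : ℝ) := by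
          field_simp
        rw [harg]
        have harg2 : ((-(w * v) : ℝ) : ℂ) * I = -((w * v : ℝ) : ℂ) * I := by push_cast; ring
        rw [harg2, mul_comm]
      · rw [Set.indicator_of_notMem hv, Set.indicator_of_notMem hv, mul_zero]
    rw [MeasureTheory.integral_congr_ae (Eventually.of_forall hptwise),
      MeasureTheory.integral_indicator measurableSet_Ioc, ← intervalIntegral.integral_of_le hab]
  have h2pi : (0:ℝ) < 2 * Real.pi := by positivity
  have hseq : Tendsto (fun M : ℕ => ((2 * M + 1) * c : ℝ)) atTop atTop := by
    apply tendsto_atTop_mono (fun M => ?_) (Tendsto.const_mul_atTop hc tendsto_natCast_atTop_atTop)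
    · exact (fun M => by nlinarith [(Nat.cast_nonneg M : (0:ℝ) ≤ M)]) M
  have hcc : Filter.atTop ≤ Filter.cocompact ℝ := by
    rw [cocompact_eq_atBot_atTop]; exact le_sup_right
  have hcc' : Filter.atBot ≤ Filter.cocompact ℝ := by
    rw [cocompact_eq_atBot_atTop]; exact le_sup_left
  have h1 : Tendsto (fun M : ℕ => F ((2 * M + 1) * c)) atTop (nhds 0) := by
    have t1 : Tendsto (fun M : ℕ => ((2 * M + 1) * c / (2 * Real.pi) : ℝ)) atTop atTop :=
      hseq.atTop_div_const h2pi
    have := hRL.comp ((t1.mono_right hcc))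
    exact this.congr fun M => hFeq _
  have h2 : Tendsto (fun M : ℕ => F (-((2 * M + 1) * c))) atTop (nhds 0) := by
    have t2 : Tendsto (fun M : ℕ => (-((2 * M + 1) * c) / (2 * Real.pi) : ℝ)) atTop atBot := by
      have hneg : Tendsto (fun M : ℕ => (-((2 * M + 1) * c) : ℝ)) atTop atBot :=
        tendsto_neg_atBot_iff.mpr hseq
      exact hneg.atBot_div_const h2pi
    have := hRL.comp ((t2.mono_right hcc'))
    exact this.congr fun M => hFeq _
  -- decompose the sine integral into two Fourier integrals
  have hexpcont : ∀ w : ℝ, Continuous (fun u : ℝ => Complex.exp (-((w * u : ℝ) : ℂ) * I)) := by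
    intro w
    apply Complex.continuous_exp.comp
    apply Continuous.mul _ continuous_const
    apply Continuous.neg
    exact Complex.continuous_ofReal.comp (continuous_const.mul continuous_id)
  have hint1 : ∀ w : ℝ, IntervalIntegrable
      (fun u => φ u * Complex.exp (-((w * u : ℝ) : ℂ) * I)) volume a (a + δ) :=
    fun w => hφ.mul_continuousOn (hexpcont w).continuousOn
  have key : ∀ M : ℕ, (∫ u in a..(a + δ),
        φ u * Complex.sin ((2 * (M:ℂ) + 1) * ((c * (a - u) : ℝ) : ℂ)))
      = (I/2) * (Complex.exp (-(((2 * M + 1) * c * a : ℝ) : ℂ) * I) * F (-((2 * M + 1) * c))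
          - Complex.exp ((((2 * M + 1) * c * a : ℝ) : ℂ) * I) * F ((2 * M + 1) * c)) := by
    intro M
    have hpt : ∀ u : ℝ, φ u * Complex.sin ((2 * (M:ℂ) + 1) * ((c * (a - u) : ℝ) : ℂ))
        = (I/2) * Complex.exp (-(((2 * M + 1) * c * a : ℝ) : ℂ) * I)
            * (φ u * Complex.exp (-((-((2 * M + 1) * c) * u : ℝ) : ℂ) * I))
          - (I/2) * Complex.exp ((((2 * M + 1) * c * a : ℝ) : ℂ) * I)
            * (φ u * Complex.exp (-(((2 * M + 1) * c * u : ℝ) : ℂ) * I)) := by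
      intro u
      have e1 : Complex.exp (-((2 * (M:ℂ) + 1) * ((c * (a - u) : ℝ) : ℂ)) * I)
          = Complex.exp (-(((2 * M + 1) * c * a : ℝ) : ℂ) * I)
            * Complex.exp (-((-((2 * M + 1) * c) * u : ℝ) : ℂ) * I) := by
        rw [← Complex.exp_add]; congr 1; push_cast; ring
      have e2 : Complex.exp ((2 * (M:ℂ) + 1) * ((c * (a - u) : ℝ) : ℂ) * I)
          = Complex.exp ((((2 * M + 1) * c * a : ℝ) : ℂ) * I)
            * Complex.exp (-(((2 * M + 1) * c * u : ℝ) : ℂ) * I) := by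
        rw [← Complex.exp_add]; congr 1; push_cast; ring
      rw [Complex.sin, e1, e2]
      ring
    rw [intervalIntegral.integral_congr (fun u _ => hpt u),
      intervalIntegral.integral_sub (((hint1 _).const_mul _)) (((hint1 _).const_mul _)),
      intervalIntegral.integral_const_mul, intervalIntegral.integral_const_mul]
    simp only [hF]
    ring
  have hbound : ∀ M : ℕ, ‖∫ u in a..(a + δ),
        φ u * Complex.sin ((2 * (M:ℂ) + 1) * ((c * (a - u) : ℝ) : ℂ))‖
      ≤ (1/2) * (‖F (-((2 * M + 1) * c))‖ + ‖F ((2 * M + 1) * c)‖) := by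
    intro M
    rw [key M]
    rw [norm_mul]
    have hI2 : ‖(I/2 : ℂ)‖ = 1/2 := by
      rw [norm_div, Complex.norm_I]
      simp
    rw [hI2]
    gcongr
    refine (norm_sub_le _ _).trans ?_
    rw [norm_mul, norm_mul]
    have u1 : ‖Complex.exp (-(((2 * M + 1) * c * a : ℝ) : ℂ) * I)‖ = 1 := by
      rw [show (-(((2 * M + 1) * c * a : ℝ) : ℂ)) = ((-((2 * M + 1) * c * a) : ℝ) : ℂ) by push_cast; ring]
      exact Complex.norm_exp_ofReal_mul_I _
    have u2 : ‖Complex.exp ((((2 * M + 1) * c * a : ℝ) : ℂ) * I)‖ = 1 :=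
      Complex.norm_exp_ofReal_mul_I _
    rw [u1, u2, one_mul, one_mul]
  have hb : Tendsto (fun M : ℕ => (1/2) * (‖F (-((2 * M + 1) * c))‖ + ‖F ((2 * M + 1) * c)‖))
      atTop (nhds 0) := by
    have := ((h2.norm.add h1.norm).const_mul (1/2 : ℝ))
    simpa using this
  exact squeeze_zero_norm hbound hb


lemma dirichlet_mul' (M : ℕ) (c a u : ℝ) :
    (∑ n ∈ Finset.Icc (-(M : ℤ)) (M : ℤ), Complex.exp (2 * n * c * (a - u) * I))
        * ((Real.sin (c * (a - u)) : ℝ) : ℂ)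
      = Complex.sin ((2 * (M:ℂ) + 1) * ((c * (a - u) : ℝ) : ℂ)) := by
  have hcongr : ∀ n ∈ Finset.Icc (-(M : ℤ)) (M : ℤ),
      Complex.exp (2 * (n:ℂ) * c * ((a:ℂ) - u) * I)
        = Complex.exp (2 * (n:ℂ) * ((c * (a - u) : ℝ) : ℂ) * I) := by
    intro n _; congr 1; push_cast; ring
  rw [Finset.sum_congr rfl hcongr, Complex.ofReal_sin]
  exact dirichlet_mul M (c * (a - u))

theorem fourier_corollary_right (a δ : ℝ) (hδ : 0 < δ)
    (f f' : ℝ → ℂ)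
    (hdiff : ∀ x ∈ Set.Icc a (a + δ), HasDerivAt f (f' x) x)
    (hint : IntervalIntegrable f' volume a (a + δ)) :
    Filter.Tendsto (fun M : ℕ => ((1 / (2 * δ) : ℝ) : ℂ) *
        ∑ n ∈ Finset.Icc (-(M : ℤ)) (M : ℤ),
          Complex.exp (Complex.I * Real.pi * n * a / δ) *
            ∫ u in a..(a + δ), f u * Complex.exp (-(Complex.I * Real.pi * n * u) / δ))
      Filter.atTop (nhds (f a / 2)) := by
  have hab : a ≤ a + δ := by linarith
  set c : ℝ := Real.pi / (2 * δ) with hcdef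
  have hc : 0 < c := div_pos Real.pi_pos (by linarith)
  have hcd : c * δ = Real.pi / 2 := by rw [hcdef]; field_simp
  have hδC : (δ : ℂ) ≠ 0 := by exact_mod_cast hδ.ne'
  have hcC : (c : ℂ) = (Real.pi : ℂ) / (2 * (δ:ℂ)) := by rw [hcdef]; push_cast; ring
  have hfc : ContinuousOn f (Set.Icc a (a + δ)) :=
    fun x hx => (hdiff x hx).continuousAt.continuousWithinAt
  have hfint : IntervalIntegrable f volume a (a + δ) := by
    apply ContinuousOn.intervalIntegrable
    rwa [Set.uIcc_of_le hab]
  have hψcont : ContinuousOn (psi a c f f') (Set.Icc a (a + δ)) :=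
    psi_continuousOn a δ c f f' hδ hc hcd hdiff
  have hψint : IntervalIntegrable (psi a c f f') volume a (a + δ) := by
    apply ContinuousOn.intervalIntegrable
    rwa [Set.uIcc_of_le hab]
  -- continuity of exponentials
  have hexpc : ∀ n : ℤ, Continuous (fun u : ℝ => Complex.exp (2 * (n:ℂ) * c * ((a:ℂ) - u) * I)) := by
    intro n
    apply Complex.continuous_exp.comp
    apply Continuous.mul _ continuous_const
    apply Continuous.mul continuous_const
    exact continuous_const.sub Complex.continuous_ofReal
  have hintfe : ∀ n : ℤ, IntervalIntegrable
      (fun u => f u * Complex.exp (2 * (n:ℂ) * c * ((a:ℂ) - u) * I)) volume a (a + δ) :=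
    fun n => hfint.mul_continuousOn (hexpc n).continuousOn
  -- Step A: transform each term
  have hterm : ∀ M : ℕ, ∀ n ∈ Finset.Icc (-(M : ℤ)) (M : ℤ),
      Complex.exp (Complex.I * Real.pi * n * a / δ) *
          ∫ u in a..(a + δ), f u * Complex.exp (-(Complex.I * Real.pi * n * u) / δ)
        = ∫ u in a..(a + δ), f u * Complex.exp (2 * (n:ℂ) * c * ((a:ℂ) - u) * I) := by
    intro M n _
    rw [← intervalIntegral.integral_const_mul]
    apply intervalIntegral.integral_congr
    intro u _
    dsimp only
    have : Complex.exp (Complex.I * Real.pi * n * a / δ) *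
        (f u * Complex.exp (-(Complex.I * Real.pi * n * u) / δ))
        = f u * (Complex.exp (Complex.I * Real.pi * n * a / δ)
            * Complex.exp (-(Complex.I * Real.pi * n * u) / δ)) := by ring
    rw [this, ← Complex.exp_add]
    congr 1
    rw [hcC]
    field_simp
    ring
  -- Step C: pointwise splitting
  have hsplit : ∀ M : ℕ, ∀ u ∈ Set.uIcc a (a + δ),
      (∑ n ∈ Finset.Icc (-(M : ℤ)) (M : ℤ),
          f u * Complex.exp (2 * (n:ℂ) * c * ((a:ℂ) - u) * I))
        = f a * (∑ n ∈ Finset.Icc (-(M : ℤ)) (M : ℤ),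
            Complex.exp (2 * (n:ℂ) * c * ((a:ℂ) - u) * I))
          + psi a c f f' u * Complex.sin ((2 * (M:ℂ) + 1) * ((c * (a - u) : ℝ) : ℂ)) := by
    intro M u hu
    rw [Set.uIcc_of_le hab] at hu
    have hfu := psi_spec a δ c f f' hδ hc hcd u hu
    rw [← Finset.mul_sum,
      show f u = f a + psi a c f f' u * ((Real.sin (c * (a - u)) : ℝ) : ℂ) by
        linear_combination hfu,
      add_mul, mul_assoc, mul_comm ((Real.sin (c * (a - u)) : ℝ) : ℂ), dirichlet_mul']
  -- Step D: evaluate per M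
  have hM : ∀ M : ℕ, ((1 / (2 * δ) : ℝ) : ℂ) *
      (∑ n ∈ Finset.Icc (-(M : ℤ)) (M : ℤ),
        Complex.exp (Complex.I * Real.pi * n * a / δ) *
          ∫ u in a..(a + δ), f u * Complex.exp (-(Complex.I * Real.pi * n * u) / δ))
      = f a / 2 + ((1 / (2 * δ) : ℝ) : ℂ) *
          ∫ u in a..(a + δ),
            psi a c f f' u * Complex.sin ((2 * (M:ℂ) + 1) * ((c * (a - u) : ℝ) : ℂ)) := by
    intro M
    rw [Finset.sum_congr rfl (hterm M), ← intervalIntegral.integral_finset_sum (fun n _ => hintfe n),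
      intervalIntegral.integral_congr (hsplit M)]
    have hint2 : IntervalIntegrable (fun u => f a * (∑ n ∈ Finset.Icc (-(M : ℤ)) (M : ℤ),
        Complex.exp (2 * (n:ℂ) * c * ((a:ℂ) - u) * I))) volume a (a + δ) := by
      apply Continuous.intervalIntegrable
      exact continuous_const.mul (continuous_finset_sum _ (fun n _ => hexpc n))
    have hint3 : IntervalIntegrable (fun u =>
        psi a c f f' u * Complex.sin ((2 * (M:ℂ) + 1) * ((c * (a - u) : ℝ) : ℂ)))
        volume a (a + δ) := by
      apply hψint.mul_continuousOn
      apply Continuous.continuousOn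
      apply Complex.continuous_sin.comp
      apply Continuous.mul continuous_const
      exact Complex.continuous_ofReal.comp (continuous_const.mul (continuous_const.sub continuous_id))
    rw [intervalIntegral.integral_add hint2 hint3, intervalIntegral.integral_const_mul,
      intervalIntegral.integral_finset_sum
        (fun n _ => ((hexpc n).intervalIntegrable _ _ : IntervalIntegrable _ volume a (a + δ))),
      kernel_integral a δ c hδ hc hcd M, mul_add]
    congr 1
    push_cast
    field_simp
  have hR := rl_limit a δ c hδ hc (psi a c f f') hψint
  have hfinal : Filter.Tendsto (fun M : ℕ => f a / 2 + ((1 / (2 * δ) : ℝ) : ℂ) *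
      ∫ u in a..(a + δ),
        psi a c f f' u * Complex.sin ((2 * (M:ℂ) + 1) * ((c * (a - u) : ℝ) : ℂ)))
      Filter.atTop (nhds (f a / 2)) := by
    have := Filter.Tendsto.const_add (f a / 2) (hR.const_mul ((1 / (2 * δ) : ℝ) : ℂ))
    simpa using this
  exact hfinal.congr (fun M => (hM M).symm)
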